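/- (Proposition 2.2 (iv): spectral gap / coercivity.) For every f ∈ L²_M, setting N_s = ∑' n, ∫ p, f n p, one has −⟨Q f, f⟩_M ≥ α₁ * ∑' n, ∫ p, (f n p − N_s * M n p)^2 / M n p. In particular ⟨Q f, f⟩_M ≤ 0, i.e. Q is a negative operator on L²_M. -/

import Mathlib

open MeasureTheory Real

local notation "μΩ" => Measure.prod (Measure.count : Measure ℕ) (volume : Measure ℝ)
local notation "ρΩ" => Measure.prod (Measure.prod (Measure.count : Measure ℕ) (volume : Measure ℝ)) (Measure.prod (Measure.count : Measure ℕ) (volume : Measure ℝ))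

instance : SigmaFinite (Measure.count : Measure ℕ) := by
  apply Measure.sigmaFinite_of_countable (S := Set.range (fun n : ℕ => {n}))
  · exact Set.countable_range _
  · rintro s ⟨n, rfl⟩; simp [Measure.count_singleton]
  · ext x; simp

lemma sumform (h : ℕ × ℝ → ℝ) (hint : Integrable h μΩ) :
    ∫ ω, h ω ∂μΩ = ∑' n, ∫ p, h (n, p) := by
  rw [integral_prod _ hint, integral_countable' hint.integral_prod_left]
  simp [Measure.count_singleton]

lemma intform (h : ℕ × ℝ → ℝ) (hmeas : Measurable h)
    (hint : ∀ n, Integrable fun p => h (n, p))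
    (hsum : Summable fun n => ∫ p, ‖h (n, p)‖) : Integrable h μΩ := by
  rw [integrable_prod_iff hmeas.aestronglyMeasurable]
  refine ⟨Filter.Eventually.of_forall hint, ?_⟩
  rw [integrable_count_iff]
  exact hsum.congr fun n =>
    (Real.norm_of_nonneg (integral_nonneg fun p => norm_nonneg _)).symm

lemma measΩ {h : ℕ → ℝ → ℝ} (hm : ∀ n, Measurable (h n)) :
    Measurable fun ω : ℕ × ℝ => h ω.1 ω.2 :=
  (measurable_from_prod_countable_left (f := fun q : ℝ × ℕ => h q.2 q.1)
    (fun n => hm n)).comp measurable_swap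

lemma dualform (k : (ℕ × ℝ) × ℕ × ℝ → ℝ) (hk : Integrable k ρΩ) :
    (∑' n, ∫ p, ∫ ω', k ((n, p), ω') ∂μΩ) = ∫ z, k z ∂ρΩ := by
  rw [integral_prod _ hk]
  exact (sumform _ hk.integral_prod_left).symm

lemma swapform (k : (ℕ × ℝ) × ℕ × ℝ → ℝ) :
    ∫ z : (ℕ × ℝ) × ℕ × ℝ, k (z.2, z.1) ∂ρΩ = ∫ z, k z ∂ρΩ :=
  integral_prod_swap k

lemma mulform (g h : ℕ × ℝ → ℝ) :
    ∫ z : (ℕ × ℝ) × ℕ × ℝ, g z.1 * h z.2 ∂ρΩ = (∫ ω, g ω ∂μΩ) * ∫ ω, h ω ∂μΩ :=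
  integral_prod_mul g h

theorem stmt6
    (m ε : ℕ → ℝ)
    (hm : ∀ n, 0 < m n)
    (hε : Summable fun n => Real.exp (-ε n))
    (Z : ℝ) (hZ : Z = ∑' n, Real.exp (-ε n))
    (M : ℕ → ℝ → ℝ)
    (hM : ∀ n p, M n p =
      Real.exp (-(p ^ 2 / (2 * m n) + ε n)) / (Real.sqrt (2 * Real.pi * m n) * Z))
    (hMnorm : (∑' n, ∫ p, M n p) = 1)
    (α : ℕ → ℕ → ℝ → ℝ → ℝ)
    (hαmeas : ∀ n n', Measurable fun q : ℝ × ℝ => α n n' q.1 q.2)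
    (α₁ α₂ : ℝ) (hα₁ : 0 < α₁) (hα₁₂ : α₁ ≤ α₂)
    (hsym : ∀ n n' p p', α n n' p p' = α n' n p' p)
    (hbd : ∀ n n' p p', α₁ ≤ α n n' p p' ∧ α n n' p p' ≤ α₂)
    (Q : (ℕ → ℝ → ℝ) → ℕ → ℝ → ℝ)
    (hQ : ∀ f n p, Q f n p =
      ∑' n', ∫ p', α n n' p p' * (M n p * f n' p' - M n' p' * f n p))
    (memL2M : (ℕ → ℝ → ℝ) → Prop)
    (hmem : ∀ f, memL2M f ↔ (∀ n, Measurable (f n)) ∧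
      (∀ n, Integrable fun p => f n p ^ 2 / M n p) ∧
      (Summable fun n => ∫ p, f n p ^ 2 / M n p))
    (nrm : (ℕ → ℝ → ℝ) → ℝ)
    (hnrm : ∀ f, nrm f = (∑' n, ∫ p, f n p ^ 2 / M n p) ^ ((1 : ℝ) / 2)) :
    ∀ f, memL2M f → ∀ Ns : ℝ, Ns = (∑' n, ∫ p, f n p) →
      α₁ * (∑' n, ∫ p, (f n p - Ns * M n p) ^ 2 / M n p) ≤
          -(∑' n, ∫ p, Q f n p * f n p / M n p) ∧
      (∑' n, ∫ p, Q f n p * f n p / M n p) ≤ 0 := by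
  intro f hf Ns hNs
  obtain ⟨hfm, hfint, hfsum⟩ := (hmem f).mp hf
  -- positivity of Z and of the Maxwellians
  have hZpos : 0 < Z := by
    rw [hZ]
    exact Summable.tsum_pos hε (fun n => (Real.exp_pos _).le) 0 (Real.exp_pos _)
  have hMpos : ∀ n p, 0 < M n p := by
    intro n p; rw [hM]
    exact div_pos (Real.exp_pos _)
      (mul_pos (Real.sqrt_pos.2 (by have := hm n; positivity)) hZpos)
  have hMne : ∀ n p, M n p ≠ 0 := fun n p => (hMpos n p).ne'
  -- measurability of the Maxwellians
  have hMc : ∀ n, Measurable (M n) := by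
    intro n
    have : M n = fun p =>
        Real.exp (-(p ^ 2 / (2 * m n) + ε n)) / (Real.sqrt (2 * Real.pi * m n) * Z) :=
      funext fun p => hM n p
    rw [this]; fun_prop
  -- Gaussian form of the Maxwellians
  have hMeq : ∀ n, M n = fun p => Real.exp (-(1 / (2 * m n)) * p ^ 2) *
      (Real.exp (-ε n) / (Real.sqrt (2 * Real.pi * m n) * Z)) := by
    intro n; funext p
    rw [hM, show -(p ^ 2 / (2 * m n) + ε n) = (-(1 / (2 * m n)) * p ^ 2) + (-ε n) by
      have := (hm n).ne'; field_simp; ring, Real.exp_add]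
    ring
  have hMint : ∀ n, Integrable (M n) := by
    intro n; rw [hMeq n]
    exact (integrable_exp_neg_mul_sq (by have := hm n; positivity)).mul_const _
  have hMval : ∀ n, ∫ p, M n p = Real.exp (-ε n) / Z := by
    intro n
    simp only [hMeq n]
    rw [integral_mul_const, integral_gaussian,
      show Real.pi / (1 / (2 * m n)) = 2 * Real.pi * m n by
        have := (hm n).ne'; field_simp]
    have h1 : Real.sqrt (2 * Real.pi * m n) ≠ 0 :=
      ne_of_gt (Real.sqrt_pos.2 (by have := hm n; positivity))
    rw [← mul_div_assoc, mul_div_mul_left _ _ h1]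
  have hMsum : Summable fun n => ∫ p, M n p :=
    (hε.div_const Z).congr fun n => (hMval n).symm
  -- integrability and summability of f
  have key2 : ∀ n p, ‖f n p‖ ≤ (f n p ^ 2 / M n p + M n p) / 2 := by
    intro n p
    have hMp := hMpos n p
    have h2 : f n p ^ 2 = f n p ^ 2 / M n p * M n p := (div_mul_cancel₀ _ (hMne n p)).symm
    rw [Real.norm_eq_abs]
    nlinarith [sq_nonneg (|f n p| - M n p), sq_abs (f n p), hMp,
      div_nonneg (sq_nonneg (f n p)) hMp.le]
  have hfint1 : ∀ n, Integrable (f n) := by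
    intro n
    exact (((hfint n).add (hMint n)).div_const 2).mono'
      (hfm n).aestronglyMeasurable (Filter.Eventually.of_forall (key2 n))
  have hfsum1 : Summable fun n => ∫ p, ‖f n p‖ := by
    apply Summable.of_nonneg_of_le (fun n => integral_nonneg fun p => norm_nonneg _)
      (fun n => ?_) (((hfsum.add hMsum).div_const 2))
    calc ∫ p, ‖f n p‖ ≤ ∫ p, (f n p ^ 2 / M n p + M n p) / 2 :=
          integral_mono (hfint1 n).norm (((hfint n).add (hMint n)).div_const 2) (key2 n)
      _ = ((∫ p, f n p ^ 2 / M n p) + ∫ p, M n p) / 2 := by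
          rw [integral_div, integral_add (hfint n) (hMint n)]
  have hfsum0 : Summable fun n => ∫ p, f n p :=
    Summable.of_norm_bounded hfsum1 fun n => norm_integral_le_integral_norm _
  -- L¹(μΩ) memberships
  have hFm : Measurable fun ω : ℕ × ℝ => f ω.1 ω.2 := measΩ hfm
  have hMm : Measurable fun ω : ℕ × ℝ => M ω.1 ω.2 := measΩ hMc
  have hFL1 : Integrable (fun ω : ℕ × ℝ => f ω.1 ω.2) μΩ := intform _ hFm hfint1 hfsum1
  have hML1 : Integrable (fun ω : ℕ × ℝ => M ω.1 ω.2) μΩ := by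
    apply intform _ hMm hMint
    apply hMsum.congr fun n => ?_
    exact integral_congr_ae (Filter.Eventually.of_forall fun p =>
      (Real.norm_of_nonneg (hMpos n p).le).symm)
  have hSL1 : Integrable (fun ω : ℕ × ℝ => f ω.1 ω.2 ^ 2 / M ω.1 ω.2) μΩ := by
    apply intform _ ((hFm.pow_const 2).div hMm) hfint
    apply hfsum.congr fun n => ?_
    exact integral_congr_ae (Filter.Eventually.of_forall fun p =>
      (Real.norm_of_nonneg (div_nonneg (sq_nonneg _) (hMpos n p).le)).symm)
  -- values of the basic integrals on μΩ
  have hNval : ∫ ω, f ω.1 ω.2 ∂μΩ = Ns := (sumform _ hFL1).trans hNs.symm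
  have hMtot : ∫ ω, M ω.1 ω.2 ∂μΩ = 1 := (sumform _ hML1).trans hMnorm
  -- measurability of α on the product
  have hαm : Measurable fun z : (ℕ × ℝ) × ℕ × ℝ => α z.1.1 z.2.1 z.1.2 z.2.2 := by
    have h1 : Measurable fun w : (ℝ × ℝ) × ℕ × ℕ => α w.2.1 w.2.2 w.1.1 w.1.2 :=
      measurable_from_prod_countable_left fun q => hαmeas q.1 q.2
    exact h1.comp (((measurable_fst.snd.prodMk measurable_snd.snd).prodMk
      (measurable_fst.fst.prodMk measurable_snd.fst)))
  have hαbd : ∀ n n' p p', ‖α n n' p p'‖ ≤ α₂ := by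
    intro n n' p p'
    rw [Real.norm_eq_abs, abs_of_nonneg (le_trans hα₁.le (hbd n n' p p').1)]
    exact (hbd n n' p p').2
  -- product-space integrable pieces
  have hP1int : Integrable (fun z : (ℕ × ℝ) × ℕ × ℝ =>
      α z.1.1 z.2.1 z.1.2 z.2.2 * (f z.1.1 z.1.2 * f z.2.1 z.2.2)) ρΩ :=
    Integrable.bdd_mul (c := α₂) (hFL1.mul_prod hFL1)
      hαm.aestronglyMeasurable (Filter.Eventually.of_forall fun z => hαbd _ _ _ _)
  have hP2int : Integrable (fun z : (ℕ × ℝ) × ℕ × ℝ =>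
      α z.1.1 z.2.1 z.1.2 z.2.2 * (f z.1.1 z.1.2 ^ 2 / M z.1.1 z.1.2 * M z.2.1 z.2.2)) ρΩ :=
    Integrable.bdd_mul (c := α₂) (hSL1.mul_prod hML1)
      hαm.aestronglyMeasurable (Filter.Eventually.of_forall fun z => hαbd _ _ _ _)
  have hP3int : Integrable (fun z : (ℕ × ℝ) × ℕ × ℝ =>
      α z.1.1 z.2.1 z.1.2 z.2.2 * (M z.1.1 z.1.2 * (f z.2.1 z.2.2 ^ 2 / M z.2.1 z.2.2))) ρΩ :=
    Integrable.bdd_mul (c := α₂) (hML1.mul_prod hSL1)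
      hαm.aestronglyMeasurable (Filter.Eventually.of_forall fun z => hαbd _ _ _ _)
  -- the collision kernel integrand, split into its two parts
  have hKsplit : (fun z : (ℕ × ℝ) × ℕ × ℝ => α z.1.1 z.2.1 z.1.2 z.2.2 *
        (M z.1.1 z.1.2 * f z.2.1 z.2.2 - M z.2.1 z.2.2 * f z.1.1 z.1.2) *
        (f z.1.1 z.1.2 / M z.1.1 z.1.2)) =
      fun z => α z.1.1 z.2.1 z.1.2 z.2.2 * (f z.1.1 z.1.2 * f z.2.1 z.2.2) -
        α z.1.1 z.2.1 z.1.2 z.2.2 * (f z.1.1 z.1.2 ^ 2 / M z.1.1 z.1.2 * M z.2.1 z.2.2) := by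
    funext z
    have h1 := hMne z.1.1 z.1.2
    field_simp
  have hKint : Integrable (fun z : (ℕ × ℝ) × ℕ × ℝ => α z.1.1 z.2.1 z.1.2 z.2.2 *
        (M z.1.1 z.1.2 * f z.2.1 z.2.2 - M z.2.1 z.2.2 * f z.1.1 z.1.2) *
        (f z.1.1 z.1.2 / M z.1.1 z.1.2)) ρΩ := by
    rw [hKsplit]; exact hP1int.sub hP2int
  -- the inner product ⟨Qf, f⟩ as a double integral
  have hQsum : (∑' n, ∫ p, Q f n p * f n p / M n p) =
      ∫ z : (ℕ × ℝ) × ℕ × ℝ, α z.1.1 z.2.1 z.1.2 z.2.2 *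
        (M z.1.1 z.1.2 * f z.2.1 z.2.2 - M z.2.1 z.2.2 * f z.1.1 z.1.2) *
        (f z.1.1 z.1.2 / M z.1.1 z.1.2) ∂ρΩ := by
    rw [← dualform _ hKint]
    refine tsum_congr fun n => ?_
    refine integral_congr_ae (Filter.Eventually.of_forall fun p => ?_)
    have hIint : Integrable (fun ω' : ℕ × ℝ =>
        α n ω'.1 p ω'.2 * (M n p * f ω'.1 ω'.2 - M ω'.1 ω'.2 * f n p)) μΩ :=
      Integrable.bdd_mul (c := α₂)
        ((hFL1.const_mul (M n p)).sub (hML1.mul_const (f n p)))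
        ((hαm.comp (measurable_prodMk_left : Measurable fun ω' : ℕ × ℝ => ((n, p), ω'))).aestronglyMeasurable)
        (Filter.Eventually.of_forall fun ω' => hαbd _ _ _ _)
    have e1 : Q f n p = ∫ ω' : ℕ × ℝ,
        α n ω'.1 p ω'.2 * (M n p * f ω'.1 ω'.2 - M ω'.1 ω'.2 * f n p) ∂μΩ := by
      rw [hQ]; exact (sumform _ hIint).symm
    dsimp only
    rw [mul_div_assoc, e1, ← integral_mul_const]
  -- swap symmetry
  have hBswap : (∫ z : (ℕ × ℝ) × ℕ × ℝ, α z.1.1 z.2.1 z.1.2 z.2.2 *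
        (M z.1.1 z.1.2 * (f z.2.1 z.2.2 ^ 2 / M z.2.1 z.2.2)) ∂ρΩ) =
      ∫ z : (ℕ × ℝ) × ℕ × ℝ, α z.1.1 z.2.1 z.1.2 z.2.2 *
        (f z.1.1 z.1.2 ^ 2 / M z.1.1 z.1.2 * M z.2.1 z.2.2) ∂ρΩ := by
    rw [← swapform (fun z : (ℕ × ℝ) × ℕ × ℝ => α z.1.1 z.2.1 z.1.2 z.2.2 *
      (f z.1.1 z.1.2 ^ 2 / M z.1.1 z.1.2 * M z.2.1 z.2.2))]
    refine integral_congr_ae (Filter.Eventually.of_forall fun z => ?_)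
    dsimp only
    rw [hsym z.1.1 z.2.1 z.1.2 z.2.2]; ring
  -- the quadratic form with cross-section α
  have hWsplit : (fun z : (ℕ × ℝ) × ℕ × ℝ => α z.1.1 z.2.1 z.1.2 z.2.2 *
        (M z.1.1 z.1.2 * M z.2.1 z.2.2 *
          (f z.1.1 z.1.2 / M z.1.1 z.1.2 - f z.2.1 z.2.2 / M z.2.1 z.2.2) ^ 2)) =
      fun z => (α z.1.1 z.2.1 z.1.2 z.2.2 * (f z.1.1 z.1.2 ^ 2 / M z.1.1 z.1.2 * M z.2.1 z.2.2) +
        α z.1.1 z.2.1 z.1.2 z.2.2 * (M z.1.1 z.1.2 * (f z.2.1 z.2.2 ^ 2 / M z.2.1 z.2.2))) -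
        2 * (α z.1.1 z.2.1 z.1.2 z.2.2 * (f z.1.1 z.1.2 * f z.2.1 z.2.2)) := by
    funext z
    have h1 := hMne z.1.1 z.1.2
    have h2 := hMne z.2.1 z.2.2
    field_simp
    ring
  have hDint : Integrable (fun z : (ℕ × ℝ) × ℕ × ℝ => α z.1.1 z.2.1 z.1.2 z.2.2 *
        (M z.1.1 z.1.2 * M z.2.1 z.2.2 *
          (f z.1.1 z.1.2 / M z.1.1 z.1.2 - f z.2.1 z.2.2 / M z.2.1 z.2.2) ^ 2)) ρΩ := by
    rw [hWsplit]; exact (hP2int.add hP3int).sub (hP1int.const_mul 2)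
  have hDval : (∫ z : (ℕ × ℝ) × ℕ × ℝ, α z.1.1 z.2.1 z.1.2 z.2.2 *
        (M z.1.1 z.1.2 * M z.2.1 z.2.2 *
          (f z.1.1 z.1.2 / M z.1.1 z.1.2 - f z.2.1 z.2.2 / M z.2.1 z.2.2) ^ 2) ∂ρΩ) =
      2 * ((∫ z : (ℕ × ℝ) × ℕ × ℝ, α z.1.1 z.2.1 z.1.2 z.2.2 *
          (f z.1.1 z.1.2 ^ 2 / M z.1.1 z.1.2 * M z.2.1 z.2.2) ∂ρΩ) -
        ∫ z : (ℕ × ℝ) × ℕ × ℝ, α z.1.1 z.2.1 z.1.2 z.2.2 *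
          (f z.1.1 z.1.2 * f z.2.1 z.2.2) ∂ρΩ) := by
    have hadd : Integrable (fun z : (ℕ × ℝ) × ℕ × ℝ =>
        α z.1.1 z.2.1 z.1.2 z.2.2 * (f z.1.1 z.1.2 ^ 2 / M z.1.1 z.1.2 * M z.2.1 z.2.2) +
        α z.1.1 z.2.1 z.1.2 z.2.2 * (M z.1.1 z.1.2 * (f z.2.1 z.2.2 ^ 2 / M z.2.1 z.2.2))) ρΩ :=
      hP2int.add hP3int
    have hmul2 : Integrable (fun z : (ℕ × ℝ) × ℕ × ℝ =>
        2 * (α z.1.1 z.2.1 z.1.2 z.2.2 * (f z.1.1 z.1.2 * f z.2.1 z.2.2))) ρΩ :=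
      hP1int.const_mul 2
    rw [hWsplit, integral_sub hadd hmul2, integral_add hP2int hP3int,
      integral_const_mul, hBswap]
    ring
  -- basic product values
  have hSval : (∫ ω : ℕ × ℝ, f ω.1 ω.2 ^ 2 / M ω.1 ω.2 ∂μΩ) = ∑' n, ∫ p, f n p ^ 2 / M n p :=
    sumform _ hSL1
  have h10 : (∫ z : (ℕ × ℝ) × ℕ × ℝ, f z.1.1 z.1.2 * f z.2.1 z.2.2 ∂ρΩ) = Ns * Ns := by
    have h := mulform (fun ω : ℕ × ℝ => f ω.1 ω.2) (fun ω : ℕ × ℝ => f ω.1 ω.2)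
    rw [hNval] at h; exact h
  have h20 : (∫ z : (ℕ × ℝ) × ℕ × ℝ, f z.1.1 z.1.2 ^ 2 / M z.1.1 z.1.2 * M z.2.1 z.2.2 ∂ρΩ)
      = ∑' n, ∫ p, f n p ^ 2 / M n p := by
    have h := mulform (fun ω : ℕ × ℝ => f ω.1 ω.2 ^ 2 / M ω.1 ω.2) (fun ω : ℕ × ℝ => M ω.1 ω.2)
    rw [hSval, hMtot, mul_one] at h; exact h
  have h30 : (∫ z : (ℕ × ℝ) × ℕ × ℝ, M z.1.1 z.1.2 * (f z.2.1 z.2.2 ^ 2 / M z.2.1 z.2.2) ∂ρΩ)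
      = ∑' n, ∫ p, f n p ^ 2 / M n p := by
    have h := mulform (fun ω : ℕ × ℝ => M ω.1 ω.2) (fun ω : ℕ × ℝ => f ω.1 ω.2 ^ 2 / M ω.1 ω.2)
    rw [hSval, hMtot, one_mul] at h; exact h
  -- plain quadratic form (without α)
  have hP10int : Integrable (fun z : (ℕ × ℝ) × ℕ × ℝ => f z.1.1 z.1.2 * f z.2.1 z.2.2) ρΩ :=
    hFL1.mul_prod hFL1
  have hP20int : Integrable (fun z : (ℕ × ℝ) × ℕ × ℝ =>
      f z.1.1 z.1.2 ^ 2 / M z.1.1 z.1.2 * M z.2.1 z.2.2) ρΩ := hSL1.mul_prod hML1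
  have hP30int : Integrable (fun z : (ℕ × ℝ) × ℕ × ℝ =>
      M z.1.1 z.1.2 * (f z.2.1 z.2.2 ^ 2 / M z.2.1 z.2.2)) ρΩ := hML1.mul_prod hSL1
  have hW0split : (fun z : (ℕ × ℝ) × ℕ × ℝ => M z.1.1 z.1.2 * M z.2.1 z.2.2 *
        (f z.1.1 z.1.2 / M z.1.1 z.1.2 - f z.2.1 z.2.2 / M z.2.1 z.2.2) ^ 2) =
      fun z => (f z.1.1 z.1.2 ^ 2 / M z.1.1 z.1.2 * M z.2.1 z.2.2 +
        M z.1.1 z.1.2 * (f z.2.1 z.2.2 ^ 2 / M z.2.1 z.2.2)) -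
        2 * (f z.1.1 z.1.2 * f z.2.1 z.2.2) := by
    funext z
    have h1 := hMne z.1.1 z.1.2
    have h2 := hMne z.2.1 z.2.2
    field_simp
    ring
  have hW0int : Integrable (fun z : (ℕ × ℝ) × ℕ × ℝ => M z.1.1 z.1.2 * M z.2.1 z.2.2 *
        (f z.1.1 z.1.2 / M z.1.1 z.1.2 - f z.2.1 z.2.2 / M z.2.1 z.2.2) ^ 2) ρΩ := by
    rw [hW0split]; exact (hP20int.add hP30int).sub (hP10int.const_mul 2)
  have hW0val : (∫ z : (ℕ × ℝ) × ℕ × ℝ, M z.1.1 z.1.2 * M z.2.1 z.2.2 *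
        (f z.1.1 z.1.2 / M z.1.1 z.1.2 - f z.2.1 z.2.2 / M z.2.1 z.2.2) ^ 2 ∂ρΩ) =
      2 * ((∑' n, ∫ p, f n p ^ 2 / M n p) - Ns * Ns) := by
    have hadd : Integrable (fun z : (ℕ × ℝ) × ℕ × ℝ =>
        f z.1.1 z.1.2 ^ 2 / M z.1.1 z.1.2 * M z.2.1 z.2.2 +
        M z.1.1 z.1.2 * (f z.2.1 z.2.2 ^ 2 / M z.2.1 z.2.2)) ρΩ :=
      hP20int.add hP30int
    have hmul2 : Integrable (fun z : (ℕ × ℝ) × ℕ × ℝ =>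
        2 * (f z.1.1 z.1.2 * f z.2.1 z.2.2)) ρΩ := hP10int.const_mul 2
    rw [hW0split, integral_sub hadd hmul2, integral_add hP20int hP30int,
      integral_const_mul, h10, h20, h30]
    ring
  -- coercivity bound
  have hmono : α₁ * (2 * ((∑' n, ∫ p, f n p ^ 2 / M n p) - Ns * Ns)) ≤
      ∫ z : (ℕ × ℝ) × ℕ × ℝ, α z.1.1 z.2.1 z.1.2 z.2.2 *
        (M z.1.1 z.1.2 * M z.2.1 z.2.2 *
          (f z.1.1 z.1.2 / M z.1.1 z.1.2 - f z.2.1 z.2.2 / M z.2.1 z.2.2) ^ 2) ∂ρΩ := by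
    rw [← hW0val, ← integral_const_mul]
    refine integral_mono (hW0int.const_mul α₁) hDint fun z => ?_
    exact mul_le_mul_of_nonneg_right (hbd _ _ _ _).1
      (mul_nonneg (mul_pos (hMpos _ _) (hMpos _ _)).le (sq_nonneg _))
  have hDpos : 0 ≤ ∫ z : (ℕ × ℝ) × ℕ × ℝ, α z.1.1 z.2.1 z.1.2 z.2.2 *
        (M z.1.1 z.1.2 * M z.2.1 z.2.2 *
          (f z.1.1 z.1.2 / M z.1.1 z.1.2 - f z.2.1 z.2.2 / M z.2.1 z.2.2) ^ 2) ∂ρΩ :=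
    integral_nonneg fun z => mul_nonneg (le_trans hα₁.le (hbd _ _ _ _).1)
      (mul_nonneg (mul_pos (hMpos _ _) (hMpos _ _)).le (sq_nonneg _))
  have hQAB : (∑' n, ∫ p, Q f n p * f n p / M n p) =
      (∫ z : (ℕ × ℝ) × ℕ × ℝ, α z.1.1 z.2.1 z.1.2 z.2.2 *
        (f z.1.1 z.1.2 * f z.2.1 z.2.2) ∂ρΩ) -
      ∫ z : (ℕ × ℝ) × ℕ × ℝ, α z.1.1 z.2.1 z.1.2 z.2.2 *
        (f z.1.1 z.1.2 ^ 2 / M z.1.1 z.1.2 * M z.2.1 z.2.2) ∂ρΩ := by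
    rw [hQsum, hKsplit]
    exact integral_sub hP1int hP2int
  -- expansion of the projected norm
  have hTn : ∀ n, (∫ p, (f n p - Ns * M n p) ^ 2 / M n p) =
      (∫ p, f n p ^ 2 / M n p) - 2 * Ns * (∫ p, f n p) + Ns ^ 2 * ∫ p, M n p := by
    intro n
    have hpt : (fun p => (f n p - Ns * M n p) ^ 2 / M n p) =
        fun p => (f n p ^ 2 / M n p - 2 * Ns * f n p) + Ns ^ 2 * M n p := by
      funext p
      have h1 := hMne n p
      field_simp
      ring
    have ha3 : Integrable (fun p => 2 * Ns * f n p) volume := (hfint1 n).const_mul _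
    have ha1 : Integrable (fun p => f n p ^ 2 / M n p - 2 * Ns * f n p) volume :=
      (hfint n).sub ha3
    have ha2 : Integrable (fun p => Ns ^ 2 * M n p) volume := (hMint n).const_mul _
    rw [hpt, integral_add ha1 ha2, integral_sub (hfint n) ha3,
      integral_const_mul, integral_const_mul]
  have hT : (∑' n, ∫ p, (f n p - Ns * M n p) ^ 2 / M n p) =
      (∑' n, ∫ p, f n p ^ 2 / M n p) - Ns ^ 2 := by
    calc ∑' n, ∫ p, (f n p - Ns * M n p) ^ 2 / M n p
        = ∑' n, ((∫ p, f n p ^ 2 / M n p) - 2 * Ns * (∫ p, f n p) + Ns ^ 2 * ∫ p, M n p) :=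
          tsum_congr hTn
      _ = (∑' n, ((∫ p, f n p ^ 2 / M n p) - 2 * Ns * (∫ p, f n p))) +
            ∑' n, Ns ^ 2 * ∫ p, M n p :=
          Summable.tsum_add (hfsum.sub (hfsum0.mul_left _)) (hMsum.mul_left _)
      _ = ((∑' n, ∫ p, f n p ^ 2 / M n p) - ∑' n, 2 * Ns * (∫ p, f n p)) +
            Ns ^ 2 * ∑' n, ∫ p, M n p := by
          congr 1
          · exact Summable.tsum_sub hfsum (hfsum0.mul_left _)
          · exact tsum_mul_left
      _ = (∑' n, ∫ p, f n p ^ 2 / M n p) - Ns ^ 2 := by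
          rw [tsum_mul_left, hMnorm, ← hNs]; ring
  have hns : Ns ^ 2 = Ns * Ns := sq Ns
  constructor
  · rw [hT, hQAB]
    linarith [hmono, hDval]
  · rw [hQAB]
    linarith [hDpos, hDval]
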